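/- arXiv:1905.03803 — 2 statements merged into one kernel-verified Lean document; each statement's English description precedes it below -/
import Mathlib

section
/- Let {(Z_i, d_i)} be a countable collection of metric spaces without isolated points and let 0 < σ < 1. If f, g ∈ ⨁_i C(Z_i, σ d_i), then Θ_{⨁_i C(Z_i, d_i)}(f, g) ≤ 2 log((1+σ)/(1−σ)) + Θ_{⨁_i C(Z_i)^+}(f, g), where C(Z_i)^+ is the cone of nonnegative bounded continuous functions on Z_i. -/
section ConeDefs
variable {V : Type*} [AddCommGroup V] [Module ℝ V]

/-- The cone order: `x ≤_C y` iff `y - x ∈ C ∪ {0}`. -/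
def coneLE (C : Set V) (x y : V) : Prop := y - x ∈ C ∪ {0}

/-- `m(x/y; C) = sup{α : α y ≤_C x}`. -/
noncomputable def coneM (C : Set V) (x y : V) : ℝ :=
  sSup {α : ℝ | coneLE C (α • y) x}

/-- `M(x/y; C) = inf{β : x ≤_C β y}`. -/
noncomputable def coneMM (C : Set V) (x y : V) : ℝ :=
  sInf {β : ℝ | coneLE C x (β • y)}

/-- Hilbert's projective metric `Θ_C(x,y) = log(M(x/y)/m(x/y))`. -/
noncomputable def hilbertTheta (C : Set V) (x y : V) : ℝ :=
  Real.log (coneMM C x y / coneM C x y)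

end ConeDefs

/-- The cone `C(Z, c·d)` of positive bounded continuous functions with
`f(x) ≤ e^{c·d(x,y)} f(y)`. -/
def scaledLogLipCone (Z : Type*) [MetricSpace Z] (c : ℝ) :
    Set (BoundedContinuousFunction Z ℝ) :=
  {f | (∀ x, 0 < f x) ∧ ∀ x y, f x ≤ Real.exp (c * dist x y) * f y}

/-- The cone `C(Z)^+` of nonnegative bounded continuous functions (minus `0`). -/
def posCone (Z : Type*) [MetricSpace Z] : Set (BoundedContinuousFunction Z ℝ) :=
  {f | ∀ x, 0 ≤ f x} \ {0}

/-- The direct sum cone inside the `ℓ^∞`-direct sum. -/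
def directSumCone {ι : Type*} {X : ι → Type*} [∀ i, NormedAddCommGroup (X i)]
    [∀ i, NormedSpace ℝ (X i)] (C : ∀ i, Set (X i)) : Set (lp X ⊤) :=
  {x : lp X ⊤ | ∀ i, (x : ∀ i, X i) i ∈ C i ∪ {0}} \ {0}

private lemma key_exp_ineq {σ : ℝ} (hσ0 : 0 < σ) (hσ1 : σ < 1) (t : ℝ) :
    (1 - σ) * (Real.exp t - Real.exp (-(σ * t))) ≤ (1 + σ) * (Real.exp t - Real.exp (σ * t)) := by
  have h1σ' : (0:ℝ) < 1 + σ := by linarith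
  have ha : (0:ℝ) ≤ 2 * σ / (1 + σ) := by positivity
  have hb : (0:ℝ) ≤ (1 - σ) / (1 + σ) := by
    apply div_nonneg <;> linarith
  have hab : 2 * σ / (1 + σ) + (1 - σ) / (1 + σ) = 1 := by field_simp; ring
  have hj := convexOn_exp.2 (Set.mem_univ t) (Set.mem_univ (-(σ * t))) ha hb hab
  simp only [smul_eq_mul] at hj
  have harg : 2 * σ / (1 + σ) * t + (1 - σ) / (1 + σ) * (-(σ * t)) = σ * t := by
    field_simp; ring
  rw [harg] at hj
  have key : (1 + σ) * Real.exp (σ * t)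
      ≤ 2 * σ * Real.exp t + (1 - σ) * Real.exp (-(σ * t)) := by
    have h2 := mul_le_mul_of_nonneg_left hj h1σ'.le
    have h3 : (1 + σ) * (2 * σ / (1 + σ) * Real.exp t + (1 - σ) / (1 + σ) * Real.exp (-(σ * t)))
        = 2 * σ * Real.exp t + (1 - σ) * Real.exp (-(σ * t)) := by field_simp
    linarith [h3 ▸ h2]
  linarith

private lemma cone_pos {Z : Type*} [MetricSpace Z] {c : ℝ} {h : BoundedContinuousFunction Z ℝ}
    (hh : h ∈ scaledLogLipCone Z c ∪ {0}) (x : Z) : 0 ≤ h x := by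
  rcases hh with hh | hh
  · exact (hh.1 x).le
  · simp [Set.mem_singleton_iff.mp hh]

private lemma cone_smul {Z : Type*} [MetricSpace Z] {c t : ℝ}
    {p : BoundedContinuousFunction Z ℝ}
    (hp : p ∈ scaledLogLipCone Z c) (ht : 0 < t) : t • p ∈ scaledLogLipCone Z c := by
  refine ⟨fun x => ?_, fun x y => ?_⟩
  · simpa using mul_pos ht (hp.1 x)
  · have h := hp.2 x y
    simp only [BoundedContinuousFunction.coe_smul, Pi.smul_apply, smul_eq_mul]
    nlinarith [hp.1 y, Real.exp_pos (c * dist x y)]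

private lemma cone_mono {Z : Type*} [MetricSpace Z] {σ : ℝ} (hσ1 : σ ≤ 1)
    {p : BoundedContinuousFunction Z ℝ} (hp : p ∈ scaledLogLipCone Z σ) :
    p ∈ scaledLogLipCone Z 1 := by
  refine ⟨hp.1, fun x y => ?_⟩
  have h := hp.2 x y
  have hle : Real.exp (σ * dist x y) ≤ Real.exp (1 * dist x y) :=
    Real.exp_le_exp.2 (by nlinarith [dist_nonneg (x := x) (y := y)])
  nlinarith [hp.1 y, mul_le_mul_of_nonneg_right hle (hp.1 y).le]

private lemma cone_core {Z : Type*} [MetricSpace Z] {σ : ℝ} (hσ0 : 0 < σ) (hσ1 : σ < 1)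
    {u v : BoundedContinuousFunction Z ℝ}
    (hu : u ∈ scaledLogLipCone Z σ) (hv : v ∈ scaledLogLipCone Z σ)
    (huv : ∀ x, (1 + σ) / (1 - σ) * v x ≤ u x) :
    u - v ∈ scaledLogLipCone Z 1 := by
  have h1σ : (0:ℝ) < 1 - σ := by linarith
  have h1σ' : (0:ℝ) < 1 + σ := by linarith
  have hK1 : (1:ℝ) < (1 + σ) / (1 - σ) := by rw [lt_div_iff₀ h1σ]; linarith
  refine ⟨fun x => ?_, fun x y => ?_⟩
  · have h1 := huv x
    have h2 := hv.1 x
    simp only [BoundedContinuousFunction.coe_sub, Pi.sub_apply]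
    nlinarith
  · simp only [BoundedContinuousFunction.coe_sub, Pi.sub_apply, one_mul]
    set t := dist x y with htdef
    have ht0 : 0 ≤ t := dist_nonneg
    have F1 : u x ≤ Real.exp (σ * t) * u y := hu.2 x y
    have F2 : v y ≤ Real.exp (σ * t) * v x := by
      have h := hv.2 y x; rwa [dist_comm y x] at h
    have key := key_exp_ineq hσ0 hσ1 t
    have F4 : (1 + σ) * v y ≤ (1 - σ) * u y := by
      have h := huv y
      rw [div_mul_eq_mul_div, div_le_iff₀ h1σ] at h
      linarith
    have F5 : Real.exp (σ * t) ≤ Real.exp t := Real.exp_le_exp.2 (by nlinarith)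
    have Sp : (0:ℝ) < Real.exp (σ * t) := Real.exp_pos _
    have Sip : (0:ℝ) < Real.exp (-(σ * t)) := Real.exp_pos _
    have hSi : Real.exp (-(σ * t)) * Real.exp (σ * t) = 1 := by
      rw [← Real.exp_add]; simp
    have vy := hv.1 y
    have vx := hv.1 x
    have uy := hu.1 y
    have step1 : Real.exp (-(σ * t)) * v y ≤ v x := by
      have e1 : Real.exp (-(σ * t)) * (Real.exp (σ * t) * v x) = v x := by
        rw [← mul_assoc, hSi, one_mul]
      have h := mul_le_mul_of_nonneg_left F2 Sip.le
      rw [e1] at h; exact h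
    have step2 : (Real.exp t - Real.exp (-(σ * t))) * v y
        ≤ (Real.exp t - Real.exp (σ * t)) * u y := by
      nlinarith [mul_le_mul_of_nonneg_right key vy.le,
        mul_le_mul_of_nonneg_left F4 (sub_nonneg.2 F5)]
    nlinarith [F1, step1, step2]

private lemma lemA {Z : Type*} [MetricSpace Z] {σ β : ℝ} (hσ0 : 0 < σ) (hσ1 : σ < 1)
    (hβ : 0 < β) {p q : BoundedContinuousFunction Z ℝ}
    (hp : p ∈ scaledLogLipCone Z σ ∪ {0}) (hq : q ∈ scaledLogLipCone Z σ ∪ {0})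
    (hle : ∀ x, p x ≤ β * q x) :
    ((1 + σ) / (1 - σ) * β) • q - p ∈ scaledLogLipCone Z 1 ∪ {0} := by
  have h1σ : (0:ℝ) < 1 - σ := by linarith
  have hK0 : (0:ℝ) < (1 + σ) / (1 - σ) := by positivity
  rcases hq with hq | hq
  · rcases hp with hp | hp
    · left
      have hu := cone_smul hq (mul_pos hK0 hβ)
      refine cone_core hσ0 hσ1 hu hp (fun x => ?_)
      have h := hle x
      simp only [BoundedContinuousFunction.coe_smul, Pi.smul_apply, smul_eq_mul]
      nlinarith
    · left
      rw [Set.mem_singleton_iff.mp hp, sub_zero]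
      exact cone_mono hσ1.le (cone_smul hq (mul_pos hK0 hβ))
  · rw [Set.mem_singleton_iff.mp hq]
    rcases hp with hp | hp
    · rcases isEmpty_or_nonempty Z with hZ | hZ
      · right
        apply Set.mem_singleton_iff.mpr
        ext x
        exact isEmptyElim x
      · exfalso
        obtain ⟨x⟩ := hZ
        have h := hle x
        have h2 := hp.1 x
        rw [Set.mem_singleton_iff.mp hq] at h
        simp only [BoundedContinuousFunction.coe_zero, Pi.zero_apply] at h
        nlinarith
    · right
      rw [Set.mem_singleton_iff.mp hp]
      simp

private lemma lemB {Z : Type*} [MetricSpace Z] {σ α : ℝ} (hσ0 : 0 < σ) (hσ1 : σ < 1)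
    (hα : 0 < α) {p q : BoundedContinuousFunction Z ℝ}
    (hp : p ∈ scaledLogLipCone Z σ ∪ {0}) (hq : q ∈ scaledLogLipCone Z σ ∪ {0})
    (hle : ∀ x, α * q x ≤ p x) :
    p - ((1 - σ) / (1 + σ) * α) • q ∈ scaledLogLipCone Z 1 ∪ {0} := by
  have h1σ : (0:ℝ) < 1 - σ := by linarith
  have h1σ' : (0:ℝ) < 1 + σ := by linarith
  have hc0 : (0:ℝ) < (1 - σ) / (1 + σ) * α := by positivity
  rcases hp with hp | hp
  · rcases hq with hq | hq
    · left
      have hv := cone_smul hq hc0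
      refine cone_core hσ0 hσ1 hp hv (fun x => ?_)
      have h := hle x
      have hsc : (1 + σ) / (1 - σ) * ((1 - σ) / (1 + σ) * α) = α := by
        field_simp
      simp only [BoundedContinuousFunction.coe_smul, Pi.smul_apply, smul_eq_mul]
      calc (1 + σ) / (1 - σ) * ((1 - σ) / (1 + σ) * α * q x)
          = (1 + σ) / (1 - σ) * ((1 - σ) / (1 + σ) * α) * q x := by ring
        _ = α * q x := by rw [hsc]
        _ ≤ p x := h
    · left
      rw [Set.mem_singleton_iff.mp hq]
      simpa using cone_mono hσ1.le hp
  · rw [Set.mem_singleton_iff.mp hp]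
    rcases hq with hq | hq
    · rcases isEmpty_or_nonempty Z with hZ | hZ
      · right
        apply Set.mem_singleton_iff.mpr
        ext x
        exact isEmptyElim x
      · exfalso
        obtain ⟨x⟩ := hZ
        have h := hle x
        have h2 := hq.1 x
        rw [Set.mem_singleton_iff.mp hp] at h
        simp only [BoundedContinuousFunction.coe_zero, Pi.zero_apply] at h
        nlinarith
    · right
      rw [Set.mem_singleton_iff.mp hq]
      simp

private lemma coneLE_directSumCone {ι : Type*} {X : ι → Type*} [∀ i, NormedAddCommGroup (X i)]
    [∀ i, NormedSpace ℝ (X i)] (C : ∀ i, Set (X i)) (a b : lp X ⊤) :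
    coneLE (directSumCone C) a b ↔
      ∀ i, (b : ∀ i, X i) i - (a : ∀ i, X i) i ∈ C i ∪ {0} := by
  unfold coneLE directSumCone
  constructor
  · rintro (⟨h1, -⟩ | h0) i
    · have h := h1 i
      rwa [lp.coeFn_sub, Pi.sub_apply] at h
    · have hz : b - a = 0 := Set.mem_singleton_iff.mp h0
      have h : (b : ∀ i, X i) i - (a : ∀ i, X i) i = 0 := by
        rw [← Pi.sub_apply, ← lp.coeFn_sub, hz]
        simp
      rw [h]
      right; rfl
  · intro h
    by_cases h0 : b - a = 0
    · right; exact h0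
    · left
      refine ⟨fun i => ?_, h0⟩
      rw [lp.coeFn_sub, Pi.sub_apply]
      exact h i

private lemma mem_posCone_union {Z : Type*} [MetricSpace Z] (h : BoundedContinuousFunction Z ℝ) :
    h ∈ posCone Z ∪ {0} ↔ ∀ x, 0 ≤ h x := by
  unfold posCone
  constructor
  · rintro (⟨h1, -⟩ | h0) x
    · exact h1 x
    · simp [Set.mem_singleton_iff.mp h0]
  · intro hx
    by_cases h0 : h = 0
    · right; exact h0
    · left; exact ⟨hx, h0⟩

set_option synthInstance.maxHeartbeats 1000000
set_option maxHeartbeats 1000000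

/-- Regularity-cone bound for the Hilbert metric: for a countable family of metric
spaces without isolated points and `0 < σ < 1`, if `f, g ∈ ⨁_i C(Z_i, σ d_i)` then
`Θ_{⨁_i C(Z_i, d_i)}(f,g) ≤ 2 log((1+σ)/(1-σ)) + Θ_{⨁_i C(Z_i)^+}(f,g)`. -/
theorem theta_bound_regularity_cones {ι : Type*} [Countable ι]
    (Z : ι → Type*) [∀ i, MetricSpace (Z i)]
    (hni : ∀ i, ∀ z : Z i, Filter.NeBot (nhdsWithin z {z}ᶜ))
    (σ : ℝ) (hσ0 : 0 < σ) (hσ1 : σ < 1)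
    (f g : lp (fun i => BoundedContinuousFunction (Z i) ℝ) ⊤)
    (hf : f ∈ directSumCone (fun i => scaledLogLipCone (Z i) σ))
    (hg : g ∈ directSumCone (fun i => scaledLogLipCone (Z i) σ)) :
    hilbertTheta (directSumCone (fun i => scaledLogLipCone (Z i) 1)) f g ≤
      2 * Real.log ((1 + σ) / (1 - σ)) +
        hilbertTheta (directSumCone (fun i => posCone (Z i))) f g := by
  classical
  obtain ⟨hfm, hfne0⟩ := hf
  obtain ⟨hgm, hgne0⟩ := hg
  have hfne : f ≠ 0 := hfne0
  have h1σ : (0:ℝ) < 1 - σ := by linarith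
  have h1σ' : (0:ℝ) < 1 + σ := by linarith
  unfold hilbertTheta coneMM coneM
  set K : ℝ := (1 + σ) / (1 - σ) with hKdef
  have hK1 : 1 < K := by rw [hKdef, lt_div_iff₀ h1σ]; linarith
  have hK0 : 0 < K := by linarith
  set F := (f : ∀ i, BoundedContinuousFunction (Z i) ℝ) with hFdef
  set G := (g : ∀ i, BoundedContinuousFunction (Z i) ℝ) with hGdef
  set SM1 : Set ℝ :=
    {β : ℝ | coneLE (directSumCone fun i => scaledLogLipCone (Z i) 1) f (β • g)} with hSM1def
  set Sm1 : Set ℝ :=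
    {α : ℝ | coneLE (directSumCone fun i => scaledLogLipCone (Z i) 1) (α • g) f} with hSm1def
  set SM0 : Set ℝ :=
    {β : ℝ | coneLE (directSumCone fun i => posCone (Z i)) f (β • g)} with hSM0def
  set Sm0 : Set ℝ :=
    {α : ℝ | coneLE (directSumCone fun i => posCone (Z i)) (α • g) f} with hSm0def
  have memSM1 : ∀ β : ℝ, β ∈ SM1 ↔
      ∀ i, β • G i - F i ∈ scaledLogLipCone (Z i) 1 ∪ {0} := by
    intro β
    rw [hSM1def, Set.mem_setOf_eq, coneLE_directSumCone]
    simp only [lp.coeFn_smul, Pi.smul_apply, hFdef, hGdef]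
  have memSm1 : ∀ α : ℝ, α ∈ Sm1 ↔
      ∀ i, F i - α • G i ∈ scaledLogLipCone (Z i) 1 ∪ {0} := by
    intro α
    rw [hSm1def, Set.mem_setOf_eq, coneLE_directSumCone]
    simp only [lp.coeFn_smul, Pi.smul_apply, hFdef, hGdef]
  have memSM0 : ∀ β : ℝ, β ∈ SM0 ↔ ∀ i x, F i x ≤ β * G i x := by
    intro β
    rw [hSM0def, Set.mem_setOf_eq, coneLE_directSumCone]
    simp only [lp.coeFn_smul, Pi.smul_apply, mem_posCone_union,
      BoundedContinuousFunction.coe_sub, BoundedContinuousFunction.coe_smul, Pi.sub_apply,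
      Pi.smul_apply, smul_eq_mul, sub_nonneg, hFdef, hGdef]
  have memSm0 : ∀ α : ℝ, α ∈ Sm0 ↔ ∀ i x, α * G i x ≤ F i x := by
    intro α
    rw [hSm0def, Set.mem_setOf_eq, coneLE_directSumCone]
    simp only [lp.coeFn_smul, Pi.smul_apply, mem_posCone_union,
      BoundedContinuousFunction.coe_sub, BoundedContinuousFunction.coe_smul, Pi.sub_apply,
      Pi.smul_apply, smul_eq_mul, sub_nonneg, hFdef, hGdef]
  have hsub_M : SM1 ⊆ SM0 := by
    intro β hβ
    have h := (memSM1 β).1 hβ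
    refine (memSM0 β).2 (fun i x => ?_)
    have hpos := cone_pos (h i) x
    simp only [BoundedContinuousFunction.coe_sub, BoundedContinuousFunction.coe_smul,
      Pi.sub_apply, Pi.smul_apply, smul_eq_mul] at hpos
    linarith
  have hsub_m : Sm1 ⊆ Sm0 := by
    intro α hα
    have h := (memSm1 α).1 hα
    refine (memSm0 α).2 (fun i x => ?_)
    have hpos := cone_pos (h i) x
    simp only [BoundedContinuousFunction.coe_sub, BoundedContinuousFunction.coe_smul,
      Pi.sub_apply, Pi.smul_apply, smul_eq_mul] at hpos
    linarith
  have h0mem1 : (0:ℝ) ∈ Sm1 := by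
    refine (memSm1 0).2 (fun i => ?_)
    rw [zero_smul, sub_zero]
    rcases hfm i with h | h
    · exact Or.inl (cone_mono hσ1.le h)
    · exact Or.inr h
  have h0mem0 : (0:ℝ) ∈ Sm0 := hsub_m h0mem1
  have hfex : ∃ i z, F i ∈ scaledLogLipCone (Z i) σ ∧ 0 < F i z := by
    have he : ∃ i, F i ≠ 0 := by
      by_contra hc
      push_neg at hc
      exact hfne (lp.ext (funext fun i => by simpa using hc i))
    obtain ⟨i, hi⟩ := he
    have hc : F i ∈ scaledLogLipCone (Z i) σ := by
      rcases hfm i with h | h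
      · exact h
      · exact absurd (Set.mem_singleton_iff.mp h) hi
    exact ⟨i, Classical.choice (by
      by_contra hne
      exact hi (by ext z; exact absurd ⟨z⟩ hne)), hc, hc.1 _⟩
  have hgex : ∃ i z, G i ∈ scaledLogLipCone (Z i) σ ∧ 0 < G i z := by
    have he : ∃ i, G i ≠ 0 := by
      by_contra hc
      push_neg at hc
      exact hgne0 (lp.ext (funext fun i => by simpa using hc i))
    obtain ⟨i, hi⟩ := he
    have hc : G i ∈ scaledLogLipCone (Z i) σ := by
      rcases hgm i with h | h
      · exact h
      · exact absurd (Set.mem_singleton_iff.mp h) hi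
    exact ⟨i, Classical.choice (by
      by_contra hne
      exact hi (by ext z; exact absurd ⟨z⟩ hne)), hc, hc.1 _⟩
  obtain ⟨i₁, z₁, hg1c, hg1p⟩ := hgex
  have hbddSm0 : BddAbove Sm0 := by
    refine ⟨F i₁ z₁ / G i₁ z₁, fun α hα => ?_⟩
    have h := (memSm0 α).1 hα i₁ z₁
    rw [le_div_iff₀ hg1p]
    linarith
  have hbddSm1 : BddAbove Sm1 := hbddSm0.mono hsub_m
  have hm1_nonneg : 0 ≤ sSup Sm1 := le_csSup hbddSm1 h0mem1
  have hm0_nonneg : 0 ≤ sSup Sm0 := le_csSup hbddSm0 h0mem0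
  have hm1_le_m0 : sSup Sm1 ≤ sSup Sm0 := csSup_le_csSup hbddSm0 ⟨0, h0mem1⟩ hsub_m
  rcases Set.eq_empty_or_nonempty SM0 with hSM0e | hSM0ne
  · have hSM1e : SM1 = ∅ := Set.subset_empty_iff.mp (hSM0e ▸ hsub_M)
    rw [hSM1e, hSM0e, Real.sInf_empty, zero_div, Real.log_zero, zero_div, Real.log_zero,
      add_zero]
    have hl : 0 ≤ Real.log K := Real.log_nonneg hK1.le
    linarith
  · obtain ⟨β₀, hβ₀⟩ := hSM0ne
    obtain ⟨i₀, z₀, hf0c, hf0p⟩ := hfex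
    have hg0p : 0 < G i₀ z₀ := by
      have h := (memSM0 β₀).1 hβ₀ i₀ z₀
      have hgnn := cone_pos (hgm i₀) z₀
      rcases lt_or_eq_of_le hgnn with hlt | heq
      · exact hlt
      · rw [← heq, mul_zero] at h; linarith
    have hSM0_lb : ∀ β ∈ SM0, F i₀ z₀ / G i₀ z₀ ≤ β := by
      intro β hβ
      have h := (memSM0 β).1 hβ i₀ z₀
      rw [div_le_iff₀ hg0p]
      linarith
    have hc₀ : 0 < F i₀ z₀ / G i₀ z₀ := div_pos hf0p hg0p
    have hbddSM0 : BddBelow SM0 := ⟨_, hSM0_lb⟩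
    have hbddSM1 : BddBelow SM1 := hbddSM0.mono hsub_M
    have hM0_pos : 0 < sInf SM0 := lt_of_lt_of_le hc₀ (le_csInf ⟨β₀, hβ₀⟩ hSM0_lb)
    have hA : ∀ β ∈ SM0, K * β ∈ SM1 := by
      intro β hβ
      have hβpos : 0 < β := lt_of_lt_of_le hc₀ (hSM0_lb β hβ)
      refine (memSM1 (K * β)).2 (fun i => ?_)
      exact lemA hσ0 hσ1 hβpos (hfm i) (hgm i) (fun x => (memSM0 β).1 hβ i x)
    have hSM1ne : SM1.Nonempty := ⟨K * β₀, hA β₀ hβ₀⟩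
    have hM0_le_M1 : sInf SM0 ≤ sInf SM1 := csInf_le_csInf hbddSM0 hSM1ne hsub_M
    have hM1pos : 0 < sInf SM1 := lt_of_lt_of_le hM0_pos hM0_le_M1
    have hM1_le : sInf SM1 ≤ K * sInf SM0 := by
      have h : ∀ β ∈ SM0, sInf SM1 / K ≤ β := by
        intro β hβ
        rw [div_le_iff₀ hK0]
        calc sInf SM1 ≤ K * β := csInf_le hbddSM1 (hA β hβ)
          _ = β * K := mul_comm _ _
      have h2 := le_csInf ⟨β₀, hβ₀⟩ h
      rw [div_le_iff₀ hK0] at h2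
      linarith [h2]
    have hm0_le : sSup Sm0 ≤ K * sSup Sm1 := by
      refine Real.sSup_le (fun α hα => ?_) (mul_nonneg hK0.le hm1_nonneg)
      rcases le_or_gt α 0 with hα0 | hα0
      · nlinarith [mul_nonneg hK0.le hm1_nonneg]
      · have hmem : (1 - σ) / (1 + σ) * α ∈ Sm1 := by
          refine (memSm1 _).2 (fun i => ?_)
          exact lemB hσ0 hσ1 hα0 (hfm i) (hgm i) (fun x => (memSm0 α).1 hα i x)
        have h1 : (1 - σ) / (1 + σ) * α ≤ sSup Sm1 := le_csSup hbddSm1 hmem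
        have h2 : K * ((1 - σ) / (1 + σ) * α) = α := by
          rw [hKdef]; field_simp
        nlinarith [mul_le_mul_of_nonneg_left h1 hK0.le]
    have hm0_le_M0 : sSup Sm0 ≤ sInf SM0 := by
      refine Real.sSup_le (fun α hα => ?_) hM0_pos.le
      refine le_csInf ⟨β₀, hβ₀⟩ (fun β hβ => ?_)
      have h1 := (memSm0 α).1 hα i₀ z₀
      have h2 := (memSM0 β).1 hβ i₀ z₀
      exact le_of_mul_le_mul_right (h1.trans h2) hg0p
    rcases eq_or_lt_of_le hm1_nonneg with hm1z | hm1pos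
    · rw [← hm1z, div_zero, Real.log_zero]
      have hlog2 : 0 ≤ Real.log K := Real.log_nonneg hK1.le
      have hrhs : 0 ≤ Real.log (sInf SM0 / sSup Sm0) := by
        rcases eq_or_lt_of_le hm0_nonneg with hm0z | hm0pos
        · rw [← hm0z, div_zero, Real.log_zero]
        · exact Real.log_nonneg ((one_le_div hm0pos).2 hm0_le_M0)
      linarith
    · have hm0pos : 0 < sSup Sm0 := lt_of_lt_of_le hm1pos hm1_le_m0
      have h1 : sSup Sm0 / K ≤ sSup Sm1 := by
        rw [div_le_iff₀ hK0]
        linarith [hm0_le]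
      have hdiv : sInf SM1 / sSup Sm1 ≤ K * sInf SM0 / (sSup Sm0 / K) :=
        div_le_div₀ (mul_nonneg hK0.le hM0_pos.le) hM1_le (div_pos hm0pos hK0) h1
      have heq : K * sInf SM0 / (sSup Sm0 / K) = K ^ 2 * (sInf SM0 / sSup Sm0) := by
        field_simp
      rw [heq] at hdiv
      calc Real.log (sInf SM1 / sSup Sm1)
          ≤ Real.log (K ^ 2 * (sInf SM0 / sSup Sm0)) := by
            apply Real.log_le_log (by positivity) hdiv
        _ = 2 * Real.log K + Real.log (sInf SM0 / sSup Sm0) := by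
            rw [Real.log_mul (by positivity) (by positivity), Real.log_pow]
            norm_num
end

section
/- (Dual pairing bound for the Hilbert metric) Let C be a closed cone in a Banach space X and let x, y ∈ C be comparable. Then for any φ ∈ C*, ⟨x, φ⟩ = 0 iff ⟨y, φ⟩ = 0, and Θ_C(x,y) = log( sup{ (⟨x,φ⟩⟨y,ψ⟩)/(⟨y,φ⟩⟨x,ψ⟩) : φ, ψ ∈ C*, ⟨y,φ⟩⟨x,ψ⟩ ≠ 0 } ). In particular, |log(⟨x,φ⟩/⟨y,φ⟩) − log(⟨x,ψ⟩/⟨y,ψ⟩)| ≤ Θ_C(x,y) for all φ, ψ ∈ C* with nonzero pairings. -/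
section ConeDefs
variable {V : Type*} [AddCommGroup V] [Module ℝ V]

/-- `C` is a cone: closed under positive scaling, convex, and `C ∩ (-C) = ∅`. -/
def IsCone (C : Set V) : Prop :=
  (∀ x ∈ C, ∀ a : ℝ, 0 < a → a • x ∈ C) ∧ Convex ℝ C ∧ ∀ x ∈ C, -x ∉ C

/-- `x` dominates `y`. -/
def dominates (C : Set V) (x y : V) : Prop :=
  ∃ α β : ℝ, coneLE C (α • x) y ∧ coneLE C y (β • x)

/-- `x` and `y` are comparable. -/
def coneComparable (C : Set V) (x y : V) : Prop :=
  dominates C x y ∧ dominates C y x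

end ConeDefs

/-- The dual wedge `C* = {ψ : ⟨x,ψ⟩ ≥ 0 for all x ∈ C}` of a cone in a Banach space. -/
def dualWedge {X : Type*} [NormedAddCommGroup X] [NormedSpace ℝ X] (C : Set X) :
    Set (StrongDual ℝ X) :=
  {ψ | ∀ x ∈ C, 0 ≤ ψ x}

lemma cone_dual_mem {X : Type*} [NormedAddCommGroup X] [NormedSpace ℝ X]
    (C : Set X) (hC : IsCone C) (hCc : IsClosed (C ∪ {0})) (z : X)
    (h : ∀ φ ∈ dualWedge C, 0 ≤ φ z) : z ∈ C ∪ {0} := by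
  by_contra hz
  have hconv : Convex ℝ (C ∪ {0}) := by
    intro a ha b hb s t hs ht hst
    rcases ha with ha | ha
    · rcases hb with hb | hb
      · exact Or.inl (hC.2.1 ha hb hs ht hst)
      · simp only [Set.mem_singleton_iff] at hb; subst hb
        rcases eq_or_lt_of_le hs with hs0 | hs0
        · right; simp [← hs0]
        · left; simpa using hC.1 a ha s hs0
    · simp only [Set.mem_singleton_iff] at ha; subst ha
      rcases hb with hb | hb
      · rcases eq_or_lt_of_le ht with ht0 | ht0
        · right; simp [← ht0]
        · left; simpa using hC.1 b hb t ht0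
      · simp only [Set.mem_singleton_iff] at hb; subst hb
        right; simp
  obtain ⟨f, u, hfu, huz⟩ := geometric_hahn_banach_closed_point hconv hCc hz
  have hu0 : 0 < u := by simpa using hfu 0 (Or.inr rfl)
  have hfneg : ∀ c ∈ C, f c ≤ 0 := by
    intro c hc
    by_contra hpos
    push_neg at hpos
    have ht : (0:ℝ) < (u + 1) / f c := by positivity
    have := hfu (((u + 1) / f c) • c) (Or.inl (hC.1 c hc _ ht))
    rw [map_smul, smul_eq_mul, div_mul_cancel₀ _ hpos.ne'] at this
    linarith
  have hmem : (-f : StrongDual ℝ X) ∈ dualWedge C := by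
    intro c hc
    simpa using hfneg c hc
  have := h (-f) hmem
  simp only [ContinuousLinearMap.neg_apply, le_neg, neg_zero] at this
  linarith


/-- Dual pairing characterization of the Hilbert metric, and the resulting dual
pairing bound. -/
theorem hilbertTheta_dual_pairing {X : Type*} [NormedAddCommGroup X]
    [NormedSpace ℝ X] [CompleteSpace X]
    (C : Set X) (hC : IsCone C) (hCc : IsClosed (C ∪ {0}))
    (x y : X) (hx : x ∈ C) (hy : y ∈ C) (hxy : coneComparable C x y) :
    (∀ φ ∈ dualWedge C, (φ x = 0 ↔ φ y = 0)) ∧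
    hilbertTheta C x y =
      Real.log (sSup {r : ℝ | ∃ φ ∈ dualWedge C, ∃ ψ ∈ dualWedge C,
        φ y * ψ x ≠ 0 ∧ r = (φ x * ψ y) / (φ y * ψ x)}) ∧
    (∀ φ ∈ dualWedge C, ∀ ψ ∈ dualWedge C,
      φ x ≠ 0 → φ y ≠ 0 → ψ x ≠ 0 → ψ y ≠ 0 →
      |Real.log (φ x / φ y) - Real.log (ψ x / ψ y)| ≤ hilbertTheta C x y) := by
  -- basic facts
  have hpair : ∀ φ ∈ dualWedge C, ∀ a b : X, coneLE C a b → φ a ≤ φ b := by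
    intro φ hφ a b hab
    have h0 : 0 ≤ φ (b - a) := by
      rcases hab with h | h
      · exact hφ _ h
      · simp only [Set.mem_singleton_iff] at h; rw [h]; simp
    rw [map_sub, sub_nonneg] at h0
    exact h0
  obtain ⟨⟨_, βx, _, hβx⟩, ⟨_, βy, _, hβy⟩⟩ := hxy
  -- part 1
  have part1 : ∀ φ ∈ dualWedge C, (φ x = 0 ↔ φ y = 0) := by
    intro φ hφ
    constructor
    · intro h
      have h1 := hpair φ hφ _ _ hβx
      rw [map_smul, smul_eq_mul, h, mul_zero] at h1
      exact le_antisymm h1 (hφ y hy)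
    · intro h
      have h1 := hpair φ hφ _ _ hβy
      rw [map_smul, smul_eq_mul, h, mul_zero] at h1
      exact le_antisymm h1 (hφ x hx)
  refine ⟨part1, ?_⟩
  have h0C : (0:X) ∉ C := fun h => hC.2.2 0 h (by simpa using h)
  have hyne : y ≠ 0 := fun h => h0C (h ▸ hy)
  -- a functional positive on y (hence on x)
  obtain ⟨ψ0, hψ0mem, hψ0y⟩ : ∃ ψ ∈ dualWedge C, 0 < ψ y := by
    have hny : -y ∉ C ∪ {0} := by
      rintro (h | h)
      · exact hC.2.2 y hy h
      · exact hyne (by simpa [neg_eq_zero] using h)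
    by_contra hcon
    push_neg at hcon
    exact hny (cone_dual_mem C hC hCc (-y) (fun φ hφ => by
      have := hcon φ hφ
      simp only [map_neg]
      linarith))
  have hψ0x : 0 < ψ0 x := by
    rcases lt_or_eq_of_le (hψ0mem x hx) with h | h
    · exact h
    · exact absurd ((part1 ψ0 hψ0mem).mp h.symm) hψ0y.ne'
  -- positivity of comparison constants
  have hβxpos : 0 < βx := by
    have h1 := hpair ψ0 hψ0mem _ _ hβx
    rw [map_smul, smul_eq_mul] at h1
    nlinarith
  have hβypos : 0 < βy := by
    have h1 := hpair ψ0 hψ0mem _ _ hβy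
    rw [map_smul, smul_eq_mul] at h1
    nlinarith
  -- the sets S and T
  set S := {α : ℝ | coneLE C (α • y) x} with hS
  set T := {β : ℝ | coneLE C x (β • y)} with hT
  have hLE : ∀ a b : X, coneLE C a b ↔ ∀ φ ∈ dualWedge C, φ a ≤ φ b := by
    intro a b
    constructor
    · exact fun h φ hφ => hpair φ hφ a b h
    · intro h
      exact cone_dual_mem C hC hCc (b - a) (fun φ hφ => by
        rw [map_sub, sub_nonneg]; exact h φ hφ)
  have hsmulK : ∀ z ∈ C ∪ {0}, ∀ a : ℝ, 0 < a → a • z ∈ C ∪ {0} := by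
    rintro z (hz | hz) a ha
    · exact Or.inl (hC.1 z hz a ha)
    · simp only [Set.mem_singleton_iff] at hz; subst hz; right; simp
  have hSmem1 : βx⁻¹ ∈ S := by
    show coneLE C (βx⁻¹ • y) x
    show x - βx⁻¹ • y ∈ C ∪ {0}
    have : x - βx⁻¹ • y = βx⁻¹ • (βx • x - y) := by
      rw [smul_sub, smul_smul, inv_mul_cancel₀ hβxpos.ne', one_smul]
    rw [this]
    exact hsmulK _ hβx _ (by positivity)
  have hTmemβ : βy ∈ T := hβy
  have hSne : S.Nonempty := ⟨_, hSmem1⟩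
  have hTne : T.Nonempty := ⟨_, hTmemβ⟩
  have hSub : ∀ ψ ∈ dualWedge C, 0 < ψ y → ∀ α ∈ S, α ≤ ψ x / ψ y := by
    intro ψ hψ hψy α hα
    have h1 := hpair ψ hψ _ _ (hα : coneLE C (α • y) x)
    rw [map_smul, smul_eq_mul] at h1
    rw [le_div_iff₀ hψy]
    exact h1
  have hTlb : ∀ φ ∈ dualWedge C, 0 < φ y → ∀ β ∈ T, φ x / φ y ≤ β := by
    intro φ hφ hφy β hβ
    have h1 := hpair φ hφ _ _ (hβ : coneLE C x (β • y))
    rw [map_smul, smul_eq_mul] at h1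
    rw [div_le_iff₀ hφy]
    exact h1
  have hSbdd : BddAbove S := ⟨_, hSub ψ0 hψ0mem hψ0y⟩
  have hTbdd : BddBelow T := ⟨_, hTlb ψ0 hψ0mem hψ0y⟩
  set m := coneM C x y with hmdef
  set M := coneMM C x y with hMdef
  have hmS : m = sSup S := rfl
  have hMT : M = sInf T := rfl
  have hm_pos : 0 < m := lt_of_lt_of_le (by positivity) (le_csSup hSbdd hSmem1)
  have hm_le : ∀ ψ ∈ dualWedge C, 0 < ψ y → m ≤ ψ x / ψ y := by
    intro ψ hψ hψy
    exact csSup_le hSne (hSub ψ hψ hψy)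
  have hM_ge : ∀ φ ∈ dualWedge C, 0 < φ y → φ x / φ y ≤ M := by
    intro φ hφ hφy
    exact le_csInf hTne (hTlb φ hφ hφy)
  have hM_pos : 0 < M := lt_of_lt_of_le (by positivity) (hM_ge ψ0 hψ0mem hψ0y)
  -- the set U
  set U := {r : ℝ | ∃ φ ∈ dualWedge C, ∃ ψ ∈ dualWedge C,
      φ y * ψ x ≠ 0 ∧ r = (φ x * ψ y) / (φ y * ψ x)} with hU
  -- signs of members of U
  have hsigns : ∀ φ ∈ dualWedge C, ∀ ψ ∈ dualWedge C, φ y * ψ x ≠ 0 →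
      0 < φ x ∧ 0 < φ y ∧ 0 < ψ x ∧ 0 < ψ y := by
    intro φ hφ ψ hψ hne
    have hφy : 0 < φ y := lt_of_le_of_ne (hφ y hy) (fun h => hne (by rw [← h, zero_mul]))
    have hψx : 0 < ψ x := lt_of_le_of_ne (hψ x hx) (fun h => hne (by rw [← h, mul_zero]))
    have hφx : 0 < φ x := lt_of_le_of_ne (hφ x hx)
      (fun h => hφy.ne' ((part1 φ hφ).mp h.symm))
    have hψy : 0 < ψ y := lt_of_le_of_ne (hψ y hy)
      (fun h => hψx.ne' ((part1 ψ hψ).mpr h.symm))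
    exact ⟨hφx, hφy, hψx, hψy⟩
  have h1U : (1:ℝ) ∈ U := by
    refine ⟨ψ0, hψ0mem, ψ0, hψ0mem, by positivity, ?_⟩
    rw [mul_comm (ψ0 x)]
    rw [div_self (by positivity)]
  have hUub : ∀ r ∈ U, r ≤ M / m := by
    rintro r ⟨φ, hφ, ψ, hψ, hne, rfl⟩
    obtain ⟨hφx, hφy, hψx, hψy⟩ := hsigns φ hφ ψ hψ hne
    have h1 : φ x / φ y ≤ M := hM_ge φ hφ hφy
    have h2 : m ≤ ψ x / ψ y := hm_le ψ hψ hψy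
    have heq : (φ x * ψ y) / (φ y * ψ x) = (φ x / φ y) / (ψ x / ψ y) := by
      field_simp
    rw [heq]
    exact div_le_div₀ hM_pos.le h1 hm_pos h2
  have hUbdd : BddAbove U := ⟨_, hUub⟩
  have hsupU_le : sSup U ≤ M / m := csSup_le ⟨1, h1U⟩ hUub
  have hsupU_pos : 0 < sSup U := lt_of_lt_of_le one_pos (le_csSup hUbdd h1U)
  -- reverse inequality
  have hMle : M ≤ m * sSup U := by
    rw [hMT]
    refine csInf_le hTbdd ?_
    show coneLE C x ((m * sSup U) • y)
    rw [hLE]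
    intro φ hφ
    rw [map_smul, smul_eq_mul]
    by_cases hφy : φ y = 0
    · rw [hφy, mul_zero, (part1 φ hφ).mpr hφy]
    · have hφy' : 0 < φ y := lt_of_le_of_ne (hφ y hy) (Ne.symm hφy)
      have hφx' : 0 < φ x := lt_of_le_of_ne (hφ x hx)
        (fun h => hφy ((part1 φ hφ).mp h.symm))
      have hcS : φ x / (φ y * sSup U) ∈ S := by
        show coneLE C ((φ x / (φ y * sSup U)) • y) x
        rw [hLE]
        intro ψ hψ
        rw [map_smul, smul_eq_mul]
        by_cases hψx : ψ x = 0
        · rw [hψx, (part1 ψ hψ).mp hψx, mul_zero]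
        · have hψx' : 0 < ψ x := lt_of_le_of_ne (hψ x hx) (Ne.symm hψx)
          have hψy' : 0 < ψ y := lt_of_le_of_ne (hψ y hy)
            (fun h => hψx ((part1 ψ hψ).mpr h.symm))
          have hrU : (φ x * ψ y) / (φ y * ψ x) ∈ U :=
            ⟨φ, hφ, ψ, hψ, by positivity, rfl⟩
          have hr : (φ x * ψ y) / (φ y * ψ x) ≤ sSup U := le_csSup hUbdd hrU
          rw [div_le_iff₀ (by positivity)] at hr
          rw [div_mul_eq_mul_div, div_le_iff₀ (by positivity)]
          nlinarith
      have hcm : φ x / (φ y * sSup U) ≤ m := le_csSup hSbdd hcS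
      rw [div_le_iff₀ (by positivity)] at hcm
      nlinarith
  have hMm : M / m = sSup U := by
    refine le_antisymm ?_ hsupU_le
    rw [div_le_iff₀ hm_pos]
    linarith [hMle, mul_comm m (sSup U)]
  have part2 : hilbertTheta C x y = Real.log (sSup U) := by
    show Real.log (M / m) = Real.log (sSup U)
    rw [hMm]
  refine ⟨part2, ?_⟩
  -- part 3
  intro φ hφ ψ hψ hφx hφy hψx hψy
  have hφx' : 0 < φ x := lt_of_le_of_ne (hφ x hx) (Ne.symm hφx)
  have hφy' : 0 < φ y := lt_of_le_of_ne (hφ y hy) (Ne.symm hφy)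
  have hψx' : 0 < ψ x := lt_of_le_of_ne (hψ x hx) (Ne.symm hψx)
  have hψy' : 0 < ψ y := lt_of_le_of_ne (hψ y hy) (Ne.symm hψy)
  have hr1U : (φ x * ψ y) / (φ y * ψ x) ∈ U := ⟨φ, hφ, ψ, hψ, by positivity, rfl⟩
  have hr2U : (ψ x * φ y) / (ψ y * φ x) ∈ U := ⟨ψ, hψ, φ, hφ, by positivity, rfl⟩
  have hlog1 : Real.log ((φ x * ψ y) / (φ y * ψ x)) ≤ hilbertTheta C x y := by
    rw [part2]
    exact Real.log_le_log (by positivity) (le_csSup hUbdd hr1U)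
  have hlog2 : Real.log ((ψ x * φ y) / (ψ y * φ x)) ≤ hilbertTheta C x y := by
    rw [part2]
    exact Real.log_le_log (by positivity) (le_csSup hUbdd hr2U)
  rw [Real.log_div (by positivity) (by positivity),
      Real.log_mul (by positivity) (by positivity),
      Real.log_mul (by positivity) (by positivity)] at hlog1 hlog2
  rw [Real.log_div hφx hφy, Real.log_div hψx hψy, abs_le]
  constructor <;> linarith
end
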